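/- Assume the Herglotz field setup with N real fields and let ξ : ℝ^d → ℝ^d and η = (η^1,…,η^N) : ℝ^d → ℝ^N be of class C¹. Suppose each field φ^i satisfies the generalized Euler–Lagrange equation, the infinitesimal invariance condition holds (for all x: Σ_ν (∂L/∂x^ν)(z(x)) ξ^ν(x) + Σ_i (∂L/∂u_i)(z(x)) η^i(x) + Σ_{ν,i} (∂L/∂p^i_ν)(z(x)) ( ∂_ν η^i(x) − Σ_μ ∂_μ φ^i(x) ∂_ν ξ^μ(x) ) + L(z(x)) Σ_ν ∂_ν ξ^ν(x) = 0), and the canonical gauge condition holds: for all ν and x, ∂_ν f(x) Σ_μ ∂_μ s^μ(x) = Σ_μ ∂_μ f(x) ∂_ν s^μ(x). Then the current J^ν(x) := ( Σ_i (∂L/∂p^i_ν)(z(x)) η^i(x) + L(z(x)) ξ^ν(x) − Σ_{i,μ} (∂L/∂p^i_ν)(z(x)) ∂_μ φ^i(x) ξ^μ(x) ) e^{−f(x)} satisfies Σ_ν ∂_ν J^ν(x) = 0 for all x (Generalized Noether Theorem for several fields). -/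

import Mathlib

/-- Partial derivative `∂_ν g` of a scalar field on `ℝ^d`. -/
noncomputable def pd {d : ℕ} (g : (Fin d → ℝ) → ℝ) (ν : Fin d) (x : Fin d → ℝ) : ℝ :=
  fderiv ℝ g x (Pi.single ν 1)

/-- `∂L/∂x^ν` for a Lagrangian `L(x, u, p, s)` on `ℝ^d × ℝ^N × (ℝ^d)^N × ℝ^d`. -/
noncomputable def pLx {d N : ℕ}
    (L : (Fin d → ℝ) × (Fin N → ℝ) × (Fin N → Fin d → ℝ) × (Fin d → ℝ) → ℝ)
    (ν : Fin d)
    (z : (Fin d → ℝ) × (Fin N → ℝ) × (Fin N → Fin d → ℝ) × (Fin d → ℝ)) : ℝ :=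
  fderiv ℝ (fun y => L (y, z.2.1, z.2.2.1, z.2.2.2)) z.1 (Pi.single ν 1)

/-- `∂L/∂u_i` for a Lagrangian `L(x, u, p, s)`. -/
noncomputable def pLu {d N : ℕ}
    (L : (Fin d → ℝ) × (Fin N → ℝ) × (Fin N → Fin d → ℝ) × (Fin d → ℝ) → ℝ)
    (i : Fin N)
    (z : (Fin d → ℝ) × (Fin N → ℝ) × (Fin N → Fin d → ℝ) × (Fin d → ℝ)) : ℝ :=
  fderiv ℝ (fun w => L (z.1, w, z.2.2.1, z.2.2.2)) z.2.1 (Pi.single i 1)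

/-- `∂L/∂p^i_ν` for a Lagrangian `L(x, u, p, s)`. -/
noncomputable def pLp {d N : ℕ}
    (L : (Fin d → ℝ) × (Fin N → ℝ) × (Fin N → Fin d → ℝ) × (Fin d → ℝ) → ℝ)
    (i : Fin N) (ν : Fin d)
    (z : (Fin d → ℝ) × (Fin N → ℝ) × (Fin N → Fin d → ℝ) × (Fin d → ℝ)) : ℝ :=
  fderiv ℝ (fun q => L (z.1, z.2.1, q, z.2.2.2)) z.2.2.1 (Pi.single i (Pi.single ν 1))

/-- `∂L/∂s_ν` for a Lagrangian `L(x, u, p, s)`. -/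
noncomputable def pLs {d N : ℕ}
    (L : (Fin d → ℝ) × (Fin N → ℝ) × (Fin N → Fin d → ℝ) × (Fin d → ℝ) → ℝ)
    (ν : Fin d)
    (z : (Fin d → ℝ) × (Fin N → ℝ) × (Fin N → Fin d → ℝ) × (Fin d → ℝ)) : ℝ :=
  fderiv ℝ (fun w => L (z.1, z.2.1, z.2.2.1, w)) z.2.2.2 (Pi.single ν 1)

open Finset

section chain
variable {d N : ℕ} {L : (Fin d → ℝ) × (Fin N → ℝ) × (Fin N → Fin d → ℝ) × (Fin d → ℝ) → ℝ}
  {w : (Fin d → ℝ) × (Fin N → ℝ) × (Fin N → Fin d → ℝ) × (Fin d → ℝ)}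

lemma pLx_eq (hL : DifferentiableAt ℝ L w) (ν : Fin d) :
    pLx L ν w = fderiv ℝ L w (Pi.single ν 1, 0, 0, 0) := by
  have hg : HasFDerivAt (fun y : Fin d → ℝ => ((y, w.2.1, w.2.2.1, w.2.2.2) :
      (Fin d → ℝ) × (Fin N → ℝ) × (Fin N → Fin d → ℝ) × (Fin d → ℝ)))
      (ContinuousLinearMap.inl ℝ _ _) w.1 := hasFDerivAt_prodMk_left w.1 w.2
  have h2 : fderiv ℝ (fun y => L (y, w.2.1, w.2.2.1, w.2.2.2)) w.1
      = (fderiv ℝ L w).comp (ContinuousLinearMap.inl ℝ _ _) :=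
    (hL.hasFDerivAt.comp w.1 hg).fderiv
  rw [pLx, h2]; rfl

lemma pLu_eq (hL : DifferentiableAt ℝ L w) (i : Fin N) :
    pLu L i w = fderiv ℝ L w (0, Pi.single i 1, 0, 0) := by
  have hg : HasFDerivAt (fun b : Fin N → ℝ => ((w.1, b, w.2.2.1, w.2.2.2) :
      (Fin d → ℝ) × (Fin N → ℝ) × (Fin N → Fin d → ℝ) × (Fin d → ℝ)))
      ((0 : (Fin N → ℝ) →L[ℝ] (Fin d → ℝ)).prod
        ((ContinuousLinearMap.id ℝ _).prod 0)) w.2.1 :=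
    (hasFDerivAt_const _ _).prodMk ((hasFDerivAt_id _).prodMk (hasFDerivAt_const _ _))
  have h2 : fderiv ℝ (fun b => L (w.1, b, w.2.2.1, w.2.2.2)) w.2.1
      = (fderiv ℝ L w).comp _ := (hL.hasFDerivAt.comp w.2.1 hg).fderiv
  rw [pLu, h2]; rfl

lemma pLp_eq (hL : DifferentiableAt ℝ L w) (i : Fin N) (ν : Fin d) :
    pLp L i ν w = fderiv ℝ L w (0, 0, Pi.single i (Pi.single ν 1), 0) := by
  have hg : HasFDerivAt (fun c : Fin N → Fin d → ℝ => ((w.1, w.2.1, c, w.2.2.2) :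
      (Fin d → ℝ) × (Fin N → ℝ) × (Fin N → Fin d → ℝ) × (Fin d → ℝ)))
      ((0 : (Fin N → Fin d → ℝ) →L[ℝ] (Fin d → ℝ)).prod
        ((0 : (Fin N → Fin d → ℝ) →L[ℝ] (Fin N → ℝ)).prod
          ((ContinuousLinearMap.id ℝ _).prod 0))) w.2.2.1 :=
    (hasFDerivAt_const _ _).prodMk ((hasFDerivAt_const _ _).prodMk
      ((hasFDerivAt_id _).prodMk (hasFDerivAt_const _ _)))
  have h2 : fderiv ℝ (fun c => L (w.1, w.2.1, c, w.2.2.2)) w.2.2.1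
      = (fderiv ℝ L w).comp _ := (hL.hasFDerivAt.comp w.2.2.1 hg).fderiv
  rw [pLp, h2]; rfl

lemma pLs_eq (hL : DifferentiableAt ℝ L w) (ν : Fin d) :
    pLs L ν w = fderiv ℝ L w (0, 0, 0, Pi.single ν 1) := by
  have hg : HasFDerivAt (fun e : Fin d → ℝ => ((w.1, w.2.1, w.2.2.1, e) :
      (Fin d → ℝ) × (Fin N → ℝ) × (Fin N → Fin d → ℝ) × (Fin d → ℝ)))
      ((0 : (Fin d → ℝ) →L[ℝ] (Fin d → ℝ)).prod
        ((0 : (Fin d → ℝ) →L[ℝ] (Fin N → ℝ)).prod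
          ((0 : (Fin d → ℝ) →L[ℝ] (Fin N → Fin d → ℝ)).prod
            (ContinuousLinearMap.id ℝ _)))) w.2.2.2 :=
    (hasFDerivAt_const _ _).prodMk ((hasFDerivAt_const _ _).prodMk
      ((hasFDerivAt_const _ _).prodMk (hasFDerivAt_id _)))
  have h2 : fderiv ℝ (fun e => L (w.1, w.2.1, w.2.2.1, e)) w.2.2.2
      = (fderiv ℝ L w).comp _ := (hL.hasFDerivAt.comp w.2.2.2 hg).fderiv
  rw [pLs, h2]; rfl

lemma clm_pi_decomp {k : ℕ} (T : (Fin k → ℝ) →L[ℝ] ℝ) (a : Fin k → ℝ) :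
    T a = ∑ ν, a ν * T (Pi.single ν 1) := by
  have h := LinearMap.pi_apply_eq_sum_univ (T : (Fin k → ℝ) →ₗ[ℝ] ℝ) a
  have hs : ∀ ν : Fin k, (fun j => if ν = j then (1:ℝ) else 0) = Pi.single ν 1 := by
    intro ν; funext j; simp [Pi.single_apply, eq_comm]
  simp only [hs] at h
  simpa [smul_eq_mul] using h

lemma clm_mat_decomp {k m : ℕ} (T : (Fin m → Fin k → ℝ) →L[ℝ] ℝ) (c : Fin m → Fin k → ℝ) :
    T c = ∑ i, ∑ ν, c i ν * T (Pi.single i (Pi.single ν 1)) := by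
  conv_lhs => rw [← Finset.univ_sum_single c, map_sum]
  refine Finset.sum_congr rfl fun i _ => ?_
  have h := LinearMap.pi_apply_eq_sum_univ
    ((T : (Fin m → Fin k → ℝ) →ₗ[ℝ] ℝ).comp
      (LinearMap.single ℝ (fun _ : Fin m => Fin k → ℝ) i)) (c i)
  have hs : ∀ ν : Fin k, (fun j => if ν = j then (1:ℝ) else 0) = Pi.single ν 1 := by
    intro ν; funext j; simp [Pi.single_apply, eq_comm]
  simp only [hs] at h
  simpa [smul_eq_mul] using h

lemma fderivL_decomp (hL : DifferentiableAt ℝ L w)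
    (v : (Fin d → ℝ) × (Fin N → ℝ) × (Fin N → Fin d → ℝ) × (Fin d → ℝ)) :
    fderiv ℝ L w v = (∑ ν, v.1 ν * pLx L ν w) + (∑ i, v.2.1 i * pLu L i w)
      + (∑ i, ∑ ν, v.2.2.1 i ν * pLp L i ν w) + (∑ ν, v.2.2.2 ν * pLs L ν w) := by
  set T := fderiv ℝ L w with hT
  have hv : v = ((v.1, 0, 0, 0) : _) + (0, v.2.1, 0, 0) + (0, 0, v.2.2.1, 0)
      + (0, 0, 0, v.2.2.2) := by
    simp [Prod.ext_iff]
  have h1 : T (v.1, 0, 0, 0) = ∑ ν, v.1 ν * pLx L ν w := by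
    have : T (v.1, 0, 0, 0) = (T.comp (ContinuousLinearMap.inl ℝ _ _)) v.1 := rfl
    rw [this, clm_pi_decomp (T.comp (ContinuousLinearMap.inl ℝ _ _))]
    exact Finset.sum_congr rfl fun ν _ => by rw [pLx_eq hL]; rfl
  have h2 : T (0, v.2.1, 0, 0) = ∑ i, v.2.1 i * pLu L i w := by
    have : T ((0, v.2.1, 0, 0) : _) =
        (T.comp ((0 : (Fin N → ℝ) →L[ℝ] (Fin d → ℝ)).prod
          ((ContinuousLinearMap.id ℝ _).prod 0))) v.2.1 := rfl
    rw [this, clm_pi_decomp _]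
    exact Finset.sum_congr rfl fun i _ => by rw [pLu_eq hL]; rfl
  have h3 : T (0, 0, v.2.2.1, 0) = ∑ i, ∑ ν, v.2.2.1 i ν * pLp L i ν w := by
    have : T ((0, 0, v.2.2.1, 0) : _) =
        (T.comp ((0 : (Fin N → Fin d → ℝ) →L[ℝ] (Fin d → ℝ)).prod
          ((0 : (Fin N → Fin d → ℝ) →L[ℝ] (Fin N → ℝ)).prod
            ((ContinuousLinearMap.id ℝ _).prod 0)))) v.2.2.1 := rfl
    rw [this, clm_mat_decomp _]
    exact Finset.sum_congr rfl fun i _ => Finset.sum_congr rfl fun ν _ => by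
      rw [pLp_eq hL]; rfl
  have h4 : T (0, 0, 0, v.2.2.2) = ∑ ν, v.2.2.2 ν * pLs L ν w := by
    have : T ((0, 0, 0, v.2.2.2) : _) =
        (T.comp ((0 : (Fin d → ℝ) →L[ℝ] (Fin d → ℝ)).prod
          ((0 : (Fin d → ℝ) →L[ℝ] (Fin N → ℝ)).prod
            ((0 : (Fin d → ℝ) →L[ℝ] (Fin N → Fin d → ℝ)).prod
              (ContinuousLinearMap.id ℝ _))))) v.2.2.2 := rfl
    rw [this, clm_pi_decomp _]
    exact Finset.sum_congr rfl fun ν _ => by rw [pLs_eq hL]; rfl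
  calc T v = T ((v.1, 0, 0, 0) + (0, v.2.1, 0, 0) + (0, 0, v.2.2.1, 0) + (0, 0, 0, v.2.2.2)) := by
        rw [← hv]
    _ = T (v.1, 0, 0, 0) + T (0, v.2.1, 0, 0) + T (0, 0, v.2.2.1, 0) + T (0, 0, 0, v.2.2.2) := by
        rw [map_add, map_add, map_add]
    _ = _ := by rw [h1, h2, h3, h4]

end chain

section pdlemmas
variable {d : ℕ}

lemma pd_add {g h : (Fin d → ℝ) → ℝ} {x} (hg : DifferentiableAt ℝ g x)
    (hh : DifferentiableAt ℝ h x) (ν : Fin d) :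
    pd (fun y => g y + h y) ν x = pd g ν x + pd h ν x := by
  simp [pd, fderiv_fun_add hg hh]

lemma pd_sub {g h : (Fin d → ℝ) → ℝ} {x} (hg : DifferentiableAt ℝ g x)
    (hh : DifferentiableAt ℝ h x) (ν : Fin d) :
    pd (fun y => g y - h y) ν x = pd g ν x - pd h ν x := by
  simp [pd, fderiv_fun_sub hg hh]

lemma pd_mul {g h : (Fin d → ℝ) → ℝ} {x} (hg : DifferentiableAt ℝ g x)
    (hh : DifferentiableAt ℝ h x) (ν : Fin d) :
    pd (fun y => g y * h y) ν x = pd g ν x * h x + g x * pd h ν x := by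
  simp [pd, fderiv_fun_mul hg hh]; ring

lemma pd_sum {ι : Type*} (s : Finset ι) {g : ι → (Fin d → ℝ) → ℝ} {x}
    (hg : ∀ i ∈ s, DifferentiableAt ℝ (g i) x) (ν : Fin d) :
    pd (fun y => ∑ i ∈ s, g i y) ν x = ∑ i ∈ s, pd (g i) ν x := by
  simp [pd, fderiv_fun_sum hg]

lemma pd_exp_neg {f : (Fin d → ℝ) → ℝ} {x} (hf : DifferentiableAt ℝ f x) (ν : Fin d) :
    pd (fun y => Real.exp (-f y)) ν x = -(pd f ν x) * Real.exp (-f x) := by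
  have h : HasFDerivAt (fun y => Real.exp (-f y))
      (Real.exp (-f x) • (-(fderiv ℝ f x))) x := (hf.hasFDerivAt.neg).exp
  simp [pd, h.fderiv]; ring

lemma pd_contDiff {g : (Fin d → ℝ) → ℝ} (hg : ContDiff ℝ 2 g) (μ : Fin d) :
    ContDiff ℝ 1 (fun x => pd g μ x) :=
  (hg.fderiv_right (by norm_num)).clm_apply contDiff_const

lemma pd_symm {g : (Fin d → ℝ) → ℝ} (hg : ContDiff ℝ 2 g) (μ ν : Fin d)
    (x : Fin d → ℝ) :
    pd (fun y => pd g μ y) ν x = pd (fun y => pd g ν y) μ x := by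
  have hd1 : Differentiable ℝ g := hg.differentiable (by norm_num)
  have hd2 : Differentiable ℝ (fderiv ℝ g) :=
    (hg.fderiv_right (by norm_num) : ContDiff ℝ 1 (fderiv ℝ g)).differentiable (by norm_num)
  have key : ∀ a b : Fin d → ℝ,
      fderiv ℝ (fun y => fderiv ℝ g y a) x b = fderiv ℝ (fderiv ℝ g) x b a := by
    intro a b
    rw [fderiv_clm_apply (hd2 x) (differentiableAt_const a)]
    simp
  show fderiv ℝ (fun y => fderiv ℝ g y (Pi.single μ 1)) x (Pi.single ν 1)
      = fderiv ℝ (fun y => fderiv ℝ g y (Pi.single ν 1)) x (Pi.single μ 1)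
  rw [key, key]
  exact second_derivative_symmetric (fun y => (hd1 y).hasFDerivAt) (hd2 x).hasFDerivAt _ _

lemma coord_diff {k : ℕ} {s : (Fin d → ℝ) → (Fin k → ℝ)} (hs : Differentiable ℝ s)
    (μ : Fin k) : Differentiable ℝ (fun y => s y μ) := fun y =>
  (hasFDerivAt_pi'.1 (hs y).hasFDerivAt μ).differentiableAt

end pdlemmas

section zsec
variable {d N : ℕ}

lemma z_hasFDerivAt
    (φ : Fin N → (Fin d → ℝ) → ℝ) (hφ : ∀ i, ContDiff ℝ 2 (φ i))
    (s : (Fin d → ℝ) → (Fin d → ℝ)) (hs : ContDiff ℝ 1 s) (x : Fin d → ℝ) :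
    HasFDerivAt (fun y => ((y, fun i => φ i y, fun i ν => pd (φ i) ν y, s y) :
        (Fin d → ℝ) × (Fin N → ℝ) × (Fin N → Fin d → ℝ) × (Fin d → ℝ)))
      ((ContinuousLinearMap.id ℝ (Fin d → ℝ)).prod
        ((ContinuousLinearMap.pi fun i => fderiv ℝ (φ i) x).prod
          ((ContinuousLinearMap.pi fun i =>
              ContinuousLinearMap.pi fun μ => fderiv ℝ (fun y => pd (φ i) μ y) x).prod
            (ContinuousLinearMap.pi fun μ => fderiv ℝ (fun y => s y μ) x)))) x := by
  refine (hasFDerivAt_id x).prodMk (HasFDerivAt.prodMk ?_ (HasFDerivAt.prodMk ?_ ?_))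
  · exact hasFDerivAt_pi.2 fun i => ((hφ i).differentiable (by norm_num) x).hasFDerivAt
  · refine hasFDerivAt_pi.2 fun i => hasFDerivAt_pi.2 fun μ => ?_
    exact ((pd_contDiff (hφ i) μ).differentiable one_ne_zero x).hasFDerivAt
  · exact hasFDerivAt_pi.2 fun μ =>
      (coord_diff (hs.differentiable one_ne_zero) μ x).hasFDerivAt

lemma dLz (L : (Fin d → ℝ) × (Fin N → ℝ) × (Fin N → Fin d → ℝ) × (Fin d → ℝ) → ℝ)
    (hL : ContDiff ℝ 1 L)
    (φ : Fin N → (Fin d → ℝ) → ℝ) (hφ : ∀ i, ContDiff ℝ 2 (φ i))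
    (s : (Fin d → ℝ) → (Fin d → ℝ)) (hs : ContDiff ℝ 1 s)
    (z : (Fin d → ℝ) → (Fin d → ℝ) × (Fin N → ℝ) × (Fin N → Fin d → ℝ) × (Fin d → ℝ))
    (hz : z = fun x => (x, fun i => φ i x, fun i ν => pd (φ i) ν x, s x)) :
    Differentiable ℝ (fun y => L (z y)) := by
  subst hz
  intro y
  exact ((hL.differentiable one_ne_zero _).hasFDerivAt.comp y
    (z_hasFDerivAt φ hφ s hs y)).differentiableAt

lemma pd_Lz (L : (Fin d → ℝ) × (Fin N → ℝ) × (Fin N → Fin d → ℝ) × (Fin d → ℝ) → ℝ)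
    (hL : ContDiff ℝ 1 L)
    (φ : Fin N → (Fin d → ℝ) → ℝ) (hφ : ∀ i, ContDiff ℝ 2 (φ i))
    (s : (Fin d → ℝ) → (Fin d → ℝ)) (hs : ContDiff ℝ 1 s)
    (z : (Fin d → ℝ) → (Fin d → ℝ) × (Fin N → ℝ) × (Fin N → Fin d → ℝ) × (Fin d → ℝ))
    (hz : z = fun x => (x, fun i => φ i x, fun i ν => pd (φ i) ν x, s x))
    (ν : Fin d) (x : Fin d → ℝ) :
    pd (fun y => L (z y)) ν x
      = pLx L ν (z x) + (∑ i, pd (φ i) ν x * pLu L i (z x))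
        + (∑ i, ∑ μ, pd (fun y => pd (φ i) μ y) ν x * pLp L i μ (z x))
        + (∑ μ, pd (fun y => s y μ) ν x * pLs L μ (z x)) := by
  subst hz
  have hLd : DifferentiableAt ℝ L
      ((x, fun i => φ i x, fun i ν => pd (φ i) ν x, s x) : _) :=
    hL.differentiable one_ne_zero _
  have hz' := z_hasFDerivAt φ hφ s hs x
  have hcomp : fderiv ℝ
      (fun y => L ((y, fun i => φ i y, fun i ν => pd (φ i) ν y, s y) : _)) x
      = (fderiv ℝ L ((x, fun i => φ i x, fun i ν => pd (φ i) ν x, s x) : _)).comp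
        ((ContinuousLinearMap.id ℝ (Fin d → ℝ)).prod
          ((ContinuousLinearMap.pi fun i => fderiv ℝ (φ i) x).prod
            ((ContinuousLinearMap.pi fun i =>
                ContinuousLinearMap.pi fun μ => fderiv ℝ (fun y => pd (φ i) μ y) x).prod
              (ContinuousLinearMap.pi fun μ => fderiv ℝ (fun y => s y μ) x)))) :=
    (hLd.hasFDerivAt.comp x hz').fderiv
  show fderiv ℝ (fun y => L ((y, fun i => φ i y, fun i ν => pd (φ i) ν y, s y) : _)) x
      (Pi.single ν 1) = _
  rw [hcomp]
  rw [show ((fderiv ℝ L ((x, fun i => φ i x, fun i ν => pd (φ i) ν x, s x) : _)).comp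
      ((ContinuousLinearMap.id ℝ (Fin d → ℝ)).prod
        ((ContinuousLinearMap.pi fun i => fderiv ℝ (φ i) x).prod
          ((ContinuousLinearMap.pi fun i =>
              ContinuousLinearMap.pi fun μ => fderiv ℝ (fun y => pd (φ i) μ y) x).prod
            (ContinuousLinearMap.pi fun μ => fderiv ℝ (fun y => s y μ) x))))) (Pi.single ν 1)
    = fderiv ℝ L ((x, fun i => φ i x, fun i ν => pd (φ i) ν x, s x) : _)
      ((Pi.single ν 1, fun i => pd (φ i) ν x,
        fun i μ => pd (fun y => pd (φ i) μ y) ν x, fun μ => pd (fun y => s y μ) ν x) : _)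
    from rfl]
  rw [fderivL_decomp hLd]
  simp [Pi.single_apply]

lemma noether_algebra {d N : ℕ}
    (F X Px : Fin d → ℝ) (Lz : ℝ) (Pu H : Fin N → ℝ)
    (Pp G H' : Fin N → Fin d → ℝ) (X' : Fin d → Fin d → ℝ)
    (G2 : Fin N → Fin d → Fin d → ℝ) (D : Fin N → Fin d → ℝ)
    (hG2 : ∀ i μ ν, G2 i μ ν = G2 i ν μ)
    (hEL : ∀ i, (∑ ν, D i ν) = Pu i + ∑ ν, F ν * Pp i ν)
    (hinv : (∑ ν, Px ν * X ν) + (∑ i, Pu i * H i)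
      + (∑ ν, ∑ i, Pp i ν * (H' i ν - ∑ μ, G i μ * X' μ ν)) + Lz * (∑ ν, X' ν ν) = 0) :
    ∑ ν, ((∑ i, (D i ν * H i + Pp i ν * H' i ν))
      + ((Px ν + (∑ i, Pu i * G i ν) + (∑ i, ∑ μ, Pp i μ * G2 i μ ν) + F ν * Lz) * X ν
          + Lz * X' ν ν)
      - ∑ i, ∑ μ, (D i ν * (G i μ * X μ) + Pp i ν * G2 i μ ν * X μ
          + Pp i ν * (G i μ * X' μ ν)))
    = ∑ ν, F ν * ((∑ i, Pp i ν * H i) + Lz * X ν - ∑ i, ∑ μ, Pp i ν * G i μ * X μ) := by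
  have h1 : (∑ ν, ∑ i, D i ν * H i)
      = (∑ i, Pu i * H i) + ∑ ν, ∑ i, F ν * (Pp i ν * H i) := by
    calc (∑ ν, ∑ i, D i ν * H i) = ∑ i, ∑ ν, D i ν * H i := Finset.sum_comm
      _ = ∑ i, (∑ ν, D i ν) * H i := by
          exact Finset.sum_congr rfl fun i _ => by rw [Finset.sum_mul]
      _ = ∑ i, (Pu i + ∑ ν, F ν * Pp i ν) * H i := by
          exact Finset.sum_congr rfl fun i _ => by rw [hEL i]
      _ = (∑ i, Pu i * H i) + ∑ i, ∑ ν, F ν * (Pp i ν * H i) := by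
          simp only [add_mul, Finset.sum_add_distrib]
          congr 1
          refine Finset.sum_congr rfl fun i _ => ?_
          rw [Finset.sum_mul]
          exact Finset.sum_congr rfl fun ν _ => by ring
      _ = (∑ i, Pu i * H i) + ∑ ν, ∑ i, F ν * (Pp i ν * H i) := by rw [Finset.sum_comm]
  have h2 : (∑ ν, ∑ i, ∑ μ, D i ν * (G i μ * X μ))
      = (∑ ν, ∑ i, Pu i * (G i ν * X ν))
        + ∑ ν, ∑ i, ∑ μ, F ν * (Pp i ν * G i μ * X μ) := by
    calc ∑ ν, ∑ i, ∑ μ, D i ν * (G i μ * X μ)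
        = ∑ i, ∑ ν, ∑ μ, D i ν * (G i μ * X μ) := Finset.sum_comm
      _ = ∑ i, (∑ ν, D i ν) * (∑ μ, G i μ * X μ) := by
          exact Finset.sum_congr rfl fun i _ => (Finset.sum_mul_sum _ _ _ _).symm
      _ = ∑ i, (Pu i + ∑ ν, F ν * Pp i ν) * (∑ μ, G i μ * X μ) := by
          exact Finset.sum_congr rfl fun i _ => by rw [hEL i]
      _ = (∑ i, ∑ μ, Pu i * (G i μ * X μ))
          + ∑ i, ∑ ν, ∑ μ, F ν * (Pp i ν * G i μ * X μ) := by
          simp only [add_mul, Finset.sum_add_distrib]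
          congr 1
          · exact Finset.sum_congr rfl fun i _ => Finset.mul_sum _ _ _
          · refine Finset.sum_congr rfl fun i _ => ?_
            rw [Finset.sum_mul_sum]
            exact Finset.sum_congr rfl fun ν _ => Finset.sum_congr rfl fun μ _ => by ring
      _ = (∑ ν, ∑ i, Pu i * (G i ν * X ν))
          + ∑ ν, ∑ i, ∑ μ, F ν * (Pp i ν * G i μ * X μ) := by
          rw [Finset.sum_comm (f := fun i μ => Pu i * (G i μ * X μ)),
            Finset.sum_comm (f := fun i ν => ∑ μ, F ν * (Pp i ν * G i μ * X μ))]
  have h3 : (∑ ν, (∑ i, ∑ μ, Pp i μ * G2 i μ ν) * X ν)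
      = ∑ ν, ∑ i, ∑ μ, Pp i ν * G2 i μ ν * X μ := by
    calc ∑ ν, (∑ i, ∑ μ, Pp i μ * G2 i μ ν) * X ν
        = ∑ ν, ∑ i, ∑ μ, Pp i μ * G2 i μ ν * X ν := by simp only [Finset.sum_mul]
      _ = ∑ ν, ∑ i, ∑ μ, Pp i μ * G2 i ν μ * X ν := by
          exact Finset.sum_congr rfl fun ν _ => Finset.sum_congr rfl fun i _ =>
            Finset.sum_congr rfl fun μ _ => by rw [hG2]
      _ = ∑ i, ∑ ν, ∑ μ, Pp i μ * G2 i ν μ * X ν := Finset.sum_comm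
      _ = ∑ i, ∑ μ, ∑ ν, Pp i μ * G2 i ν μ * X ν :=
          Finset.sum_congr rfl fun i _ => Finset.sum_comm
      _ = ∑ μ, ∑ i, ∑ ν, Pp i μ * G2 i ν μ * X ν := Finset.sum_comm
  have h5 : (∑ ν, (∑ i, Pu i * G i ν) * X ν) = ∑ ν, ∑ i, Pu i * (G i ν * X ν) := by
    refine Finset.sum_congr rfl fun ν _ => ?_
    rw [Finset.sum_mul]
    exact Finset.sum_congr rfl fun i _ => mul_assoc _ _ _
  have h6 : (∑ ν, F ν * Lz * X ν) = ∑ ν, F ν * (Lz * X ν) :=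
    Finset.sum_congr rfl fun ν _ => mul_assoc _ _ _
  simp only [mul_sub, Finset.mul_sum, Finset.sum_sub_distrib] at hinv
  simp only [Finset.sum_add_distrib, Finset.sum_sub_distrib, add_mul, mul_add, mul_sub,
    Finset.mul_sum]
  linarith [h1, h2, h3, h5, h6, hinv]

end zsec

/-- **Generalized Noether Theorem for several fields.** Under the Herglotz field setup
with `N` real fields `φ^i`, if each `φ^i` satisfies the generalized Euler–Lagrange
equation, the infinitesimal invariance condition holds, and the canonical gauge condition
holds, then the Noether current
`J^ν = (Σ_i L_{p^i_ν} η^i + L ξ^ν − Σ_{i,μ} L_{p^i_ν} ∂_μφ^i ξ^μ) e^{−f}`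
is divergence-free. -/
theorem herglotz_generalized_noether_several_fields
    (d N : ℕ)
    (L : (Fin d → ℝ) × (Fin N → ℝ) × (Fin N → Fin d → ℝ) × (Fin d → ℝ) → ℝ)
    (hL : ContDiff ℝ 1 L)
    (φ : Fin N → (Fin d → ℝ) → ℝ) (hφ : ∀ i, ContDiff ℝ 2 (φ i))
    (s : (Fin d → ℝ) → (Fin d → ℝ)) (hs : ContDiff ℝ 1 s)
    (f : (Fin d → ℝ) → ℝ) (hf : ContDiff ℝ 1 f)
    (z : (Fin d → ℝ) → (Fin d → ℝ) × (Fin N → ℝ) × (Fin N → Fin d → ℝ) × (Fin d → ℝ))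
    (hz : z = fun x => (x, fun i => φ i x, fun i ν => pd (φ i) ν x, s x))
    (herglotz : ∀ x, (∑ ν, pd (fun y => s y ν) ν x) = L (z x))
    (hgrad : ∀ (ν : Fin d) (x : Fin d → ℝ), pLs L ν (z x) = pd f ν x)
    (hdiff : ∀ (i : Fin N) (ν : Fin d), Differentiable ℝ (fun x => pLp L i ν (z x)))
    (hEL : ∀ (i : Fin N) (x : Fin d → ℝ),
      pLu L i (z x) - (∑ ν, pd (fun y => pLp L i ν (z y)) ν x)
        + (∑ ν, pd f ν x * pLp L i ν (z x)) = 0)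
    (ξ : (Fin d → ℝ) → (Fin d → ℝ)) (hξ : ContDiff ℝ 1 ξ)
    (η : Fin N → (Fin d → ℝ) → ℝ) (hη : ∀ i, ContDiff ℝ 1 (η i))
    (hinv : ∀ x, (∑ ν, pLx L ν (z x) * ξ x ν) + (∑ i, pLu L i (z x) * η i x)
      + (∑ ν, ∑ i, pLp L i ν (z x)
          * (pd (η i) ν x - ∑ μ, pd (φ i) μ x * pd (fun y => ξ y μ) ν x))
      + L (z x) * (∑ ν, pd (fun y => ξ y ν) ν x) = 0)
    (hgauge : ∀ (ν : Fin d) (x : Fin d → ℝ),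
      pd f ν x * (∑ μ, pd (fun y => s y μ) μ x) = ∑ μ, pd f μ x * pd (fun y => s y μ) ν x)
    (J : Fin d → (Fin d → ℝ) → ℝ)
    (hJ : J = fun ν y =>
      ((∑ i, pLp L i ν (z y) * η i y) + L (z y) * ξ y ν
        - ∑ i, ∑ μ, pLp L i ν (z y) * pd (φ i) μ y * ξ y μ) * Real.exp (-f y)) :
    ∀ x, (∑ ν, pd (J ν) ν x) = 0 := by
  have dG : ∀ i μ, Differentiable ℝ (fun y => pd (φ i) μ y) :=
    fun i μ => (pd_contDiff (hφ i) μ).differentiable one_ne_zero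
  have dH : ∀ i, Differentiable ℝ (η i) := fun i => (hη i).differentiable one_ne_zero
  have dX : ∀ μ : Fin d, Differentiable ℝ (fun y => ξ y μ) :=
    coord_diff (hξ.differentiable one_ne_zero)
  have df : Differentiable ℝ f := hf.differentiable one_ne_zero
  have dL : Differentiable ℝ (fun y => L (z y)) := dLz L hL φ hφ s hs z hz
  have d1 : ∀ ν, Differentiable ℝ (fun y => ∑ i, pLp L i ν (z y) * η i y) :=
    fun ν => Differentiable.fun_sum fun i _ => (hdiff i ν).mul (dH i)
  have d2 : ∀ ν, Differentiable ℝ (fun y => L (z y) * ξ y ν) := fun ν => dL.mul (dX ν)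
  have d3 : ∀ ν, Differentiable ℝ
      (fun y => ∑ i, ∑ μ, pLp L i ν (z y) * pd (φ i) μ y * ξ y μ) :=
    fun ν => Differentiable.fun_sum fun i _ => Differentiable.fun_sum fun μ _ =>
      ((hdiff i ν).mul (dG i μ)).mul (dX μ)
  have dA : ∀ ν, Differentiable ℝ (fun y => (∑ i, pLp L i ν (z y) * η i y)
      + L (z y) * ξ y ν - ∑ i, ∑ μ, pLp L i ν (z y) * pd (φ i) μ y * ξ y μ) :=
    fun ν => ((d1 ν).add (d2 ν)).sub (d3 ν)
  intro x
  -- the s-term collapses to (∂_ν f) · L(z x)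
  have hsterm : ∀ ν, (∑ μ, pd (fun y => s y μ) ν x * pLs L μ (z x))
      = pd f ν x * L (z x) := by
    intro ν
    have h : ∀ μ : Fin d, pd (fun y => s y μ) ν x * pLs L μ (z x)
        = pd f μ x * pd (fun y => s y μ) ν x := fun μ => by rw [hgrad μ x]; ring
    rw [Finset.sum_congr rfl fun μ _ => h μ, ← hgauge ν x, herglotz x]
  -- per-ν divergence of the pre-exponential part
  have hbody : ∀ ν, pd (fun y => (∑ i, pLp L i ν (z y) * η i y)
        + L (z y) * ξ y ν - ∑ i, ∑ μ, pLp L i ν (z y) * pd (φ i) μ y * ξ y μ) ν x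
      = (∑ i, (pd (fun y => pLp L i ν (z y)) ν x * η i x
            + pLp L i ν (z x) * pd (η i) ν x))
        + ((pLx L ν (z x) + (∑ i, pLu L i (z x) * pd (φ i) ν x)
            + (∑ i, ∑ μ, pLp L i μ (z x) * pd (fun y => pd (φ i) μ y) ν x)
            + pd f ν x * L (z x)) * ξ x ν
          + L (z x) * pd (fun y => ξ y ν) ν x)
        - ∑ i, ∑ μ, (pd (fun y => pLp L i ν (z y)) ν x * (pd (φ i) μ x * ξ x μ)
            + pLp L i ν (z x) * pd (fun y => pd (φ i) μ y) ν x * ξ x μ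
            + pLp L i ν (z x) * (pd (φ i) μ x * pd (fun y => ξ y μ) ν x)) := by
    intro ν
    have hsub : pd (fun y => (∑ i, pLp L i ν (z y) * η i y) + L (z y) * ξ y ν
          - ∑ i, ∑ μ, pLp L i ν (z y) * pd (φ i) μ y * ξ y μ) ν x
        = pd (fun y => (∑ i, pLp L i ν (z y) * η i y) + L (z y) * ξ y ν) ν x
          - pd (fun y => ∑ i, ∑ μ, pLp L i ν (z y) * pd (φ i) μ y * ξ y μ) ν x :=
      pd_sub (((d1 ν).add (d2 ν)) x) ((d3 ν) x) ν
    have hadd : pd (fun y => (∑ i, pLp L i ν (z y) * η i y) + L (z y) * ξ y ν) ν x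
        = pd (fun y => ∑ i, pLp L i ν (z y) * η i y) ν x
          + pd (fun y => L (z y) * ξ y ν) ν x :=
      pd_add ((d1 ν) x) ((d2 ν) x) ν
    have he1 : pd (fun y => ∑ i, pLp L i ν (z y) * η i y) ν x
        = ∑ i, (pd (fun y => pLp L i ν (z y)) ν x * η i x
            + pLp L i ν (z x) * pd (η i) ν x) := by
      have h0 : pd (fun y => ∑ i, pLp L i ν (z y) * η i y) ν x
          = ∑ i, pd (fun y => pLp L i ν (z y) * η i y) ν x :=
        pd_sum Finset.univ (fun i _ => (((hdiff i ν).mul (dH i))) x) ν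
      rw [h0]
      exact Finset.sum_congr rfl fun i _ => pd_mul ((hdiff i ν) x) ((dH i) x) ν
    have he2 : pd (fun y => L (z y) * ξ y ν) ν x
        = pd (fun y => L (z y)) ν x * ξ x ν + L (z x) * pd (fun y => ξ y ν) ν x :=
      pd_mul (dL x) ((dX ν) x) ν
    have hc1 : (∑ i, pd (φ i) ν x * pLu L i (z x))
        = ∑ i, pLu L i (z x) * pd (φ i) ν x :=
      Finset.sum_congr rfl fun i _ => mul_comm _ _
    have hc2 : (∑ i, ∑ μ, pd (fun y => pd (φ i) μ y) ν x * pLp L i μ (z x))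
        = ∑ i, ∑ μ, pLp L i μ (z x) * pd (fun y => pd (φ i) μ y) ν x :=
      Finset.sum_congr rfl fun i _ => Finset.sum_congr rfl fun μ _ => mul_comm _ _
    have he3 : pd (fun y => ∑ i, ∑ μ, pLp L i ν (z y) * pd (φ i) μ y * ξ y μ) ν x
        = ∑ i, ∑ μ, (pd (fun y => pLp L i ν (z y)) ν x * (pd (φ i) μ x * ξ x μ)
            + pLp L i ν (z x) * pd (fun y => pd (φ i) μ y) ν x * ξ x μ
            + pLp L i ν (z x) * (pd (φ i) μ x * pd (fun y => ξ y μ) ν x)) := by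
      have h0 : pd (fun y => ∑ i, ∑ μ, pLp L i ν (z y) * pd (φ i) μ y * ξ y μ) ν x
          = ∑ i, pd (fun y => ∑ μ, pLp L i ν (z y) * pd (φ i) μ y * ξ y μ) ν x :=
        pd_sum Finset.univ (fun i _ =>
          (Differentiable.fun_sum fun μ _ => ((hdiff i ν).mul (dG i μ)).mul (dX μ)) x) ν
      rw [h0]
      refine Finset.sum_congr rfl fun i _ => ?_
      have h1 : pd (fun y => ∑ μ, pLp L i ν (z y) * pd (φ i) μ y * ξ y μ) ν x
          = ∑ μ, pd (fun y => pLp L i ν (z y) * pd (φ i) μ y * ξ y μ) ν x :=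
        pd_sum Finset.univ (fun μ _ => (((hdiff i ν).mul (dG i μ)).mul (dX μ)) x) ν
      rw [h1]
      refine Finset.sum_congr rfl fun μ _ => ?_
      have h2 : pd (fun y => pLp L i ν (z y) * pd (φ i) μ y * ξ y μ) ν x
          = pd (fun y => pLp L i ν (z y) * pd (φ i) μ y) ν x * ξ x μ
            + pLp L i ν (z x) * pd (φ i) μ x * pd (fun y => ξ y μ) ν x :=
        pd_mul (((hdiff i ν).mul (dG i μ)) x) ((dX μ) x) ν
      have h3 : pd (fun y => pLp L i ν (z y) * pd (φ i) μ y) ν x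
          = pd (fun y => pLp L i ν (z y)) ν x * pd (φ i) μ x
            + pLp L i ν (z x) * pd (fun y => pd (φ i) μ y) ν x :=
        pd_mul ((hdiff i ν) x) ((dG i μ) x) ν
      rw [h2, h3]; ring
    rw [hsub, hadd, he1, he2, pd_Lz L hL φ hφ s hs z hz ν x, hsterm ν, hc1, hc2, he3]
  -- the key divergence identity
  have key : (∑ ν, pd (fun y => (∑ i, pLp L i ν (z y) * η i y)
        + L (z y) * ξ y ν - ∑ i, ∑ μ, pLp L i ν (z y) * pd (φ i) μ y * ξ y μ) ν x)
      = ∑ ν, pd f ν x * ((∑ i, pLp L i ν (z x) * η i x) + L (z x) * ξ x ν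
        - ∑ i, ∑ μ, pLp L i ν (z x) * pd (φ i) μ x * ξ x μ) := by
    rw [Finset.sum_congr rfl fun ν _ => hbody ν]
    refine noether_algebra (fun ν => pd f ν x) (fun ν => ξ x ν) (fun ν => pLx L ν (z x))
      (L (z x)) (fun i => pLu L i (z x)) (fun i => η i x)
      (fun i ν => pLp L i ν (z x)) (fun i μ => pd (φ i) μ x) (fun i ν => pd (η i) ν x)
      (fun μ ν => pd (fun y => ξ y μ) ν x)
      (fun i μ ν => pd (fun y => pd (φ i) μ y) ν x)
      (fun i ν => pd (fun y => pLp L i ν (z y)) ν x)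
      (fun i μ ν => pd_symm (hφ i) μ ν x) (fun i => by have := hEL i x; linarith)
      (hinv x)
  -- final assembly
  simp only [hJ]
  have hstep : ∀ ν, pd (fun y => ((∑ i, pLp L i ν (z y) * η i y) + L (z y) * ξ y ν
        - ∑ i, ∑ μ, pLp L i ν (z y) * pd (φ i) μ y * ξ y μ) * Real.exp (-f y)) ν x
      = (pd (fun y => (∑ i, pLp L i ν (z y) * η i y) + L (z y) * ξ y ν
          - ∑ i, ∑ μ, pLp L i ν (z y) * pd (φ i) μ y * ξ y μ) ν x
        - pd f ν x * ((∑ i, pLp L i ν (z x) * η i x) + L (z x) * ξ x ν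
          - ∑ i, ∑ μ, pLp L i ν (z x) * pd (φ i) μ x * ξ x μ)) * Real.exp (-f x) := by
    intro ν
    have hm : pd (fun y => ((∑ i, pLp L i ν (z y) * η i y) + L (z y) * ξ y ν
          - ∑ i, ∑ μ, pLp L i ν (z y) * pd (φ i) μ y * ξ y μ) * Real.exp (-f y)) ν x
        = pd (fun y => (∑ i, pLp L i ν (z y) * η i y) + L (z y) * ξ y ν
            - ∑ i, ∑ μ, pLp L i ν (z y) * pd (φ i) μ y * ξ y μ) ν x * Real.exp (-f x)
          + ((∑ i, pLp L i ν (z x) * η i x) + L (z x) * ξ x ν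
            - ∑ i, ∑ μ, pLp L i ν (z x) * pd (φ i) μ x * ξ x μ)
            * pd (fun y => Real.exp (-f y)) ν x :=
      pd_mul ((dA ν) x) ((df.neg.exp) x) ν
    rw [hm, pd_exp_neg (df x) ν]; ring
  rw [Finset.sum_congr rfl fun ν _ => hstep ν, ← Finset.sum_mul,
    Finset.sum_sub_distrib, key, sub_self, zero_mul]
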